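/- There exists a countable set X with two metrizable topologies τ₀ and τ₁ and a subset A ⊆ X such that the sets (cl₁ ∘ cl₀)ⁿ(A) for n ∈ ℕ are pairwise distinct, where clᵢ denotes closure in τᵢ. In particular, the monoid generated by the two closure operators in the monoid of self-maps of P(X) is infinite. -/

import Mathlib

namespace IKB

/-- A fresh copy of `ℕ × ℕ`, to avoid instance clashes. -/
structure P : Type where
  a : ℕ
  b : ℕ
deriving DecidableEq

lemma P.ext' {x y : P} (h1 : x.a = y.a) (h2 : x.b = y.b) : x = y := by
  cases x; cases y; cases h1; cases h2; rfl

instance : Countable P :=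
  Countable.of_equiv (ℕ × ℕ) ⟨fun p => ⟨p.1, p.2⟩, fun p => (p.a, p.b),
    fun _ => rfl, fun _ => rfl⟩

noncomputable section

/-- Component label. -/
def c (r : ℕ) (p : P) : P :=
  if p.a % 2 = r then p else ⟨p.a + 1, (Nat.unpair p.b).1⟩

def v (r : ℕ) (p : P) : ℝ :=
  if p.a % 2 = r then 0 else (((Nat.unpair p.b).2 : ℝ) + 1)⁻¹

def dd (r : ℕ) (x y : P) : ℝ :=
  if c r x = c r y then |v r x - v r y| else 1

lemma v_nonneg (r : ℕ) (p : P) : 0 ≤ v r p := by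
  unfold v; split
  · rfl
  · positivity

lemma v_le_one (r : ℕ) (p : P) : v r p ≤ 1 := by
  unfold v; split
  · exact zero_le_one
  · rw [inv_le_one_iff₀]; right
    linarith [Nat.cast_nonneg (α := ℝ) (Nat.unpair p.b).2]

lemma inj (r : ℕ) {x y : P} (hc : c r x = c r y) (hv : v r x = v r y) : x = y := by
  unfold c v at *
  by_cases hx : x.a % 2 = r <;> by_cases hy : y.a % 2 = r <;>
    simp only [hx, hy, if_pos, if_neg, if_true, if_false] at hc hv
  · exact hc
  · exfalso
    have : (0:ℝ) < (((Nat.unpair y.b).2 : ℝ) + 1)⁻¹ := by positivity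
    rw [← hv] at this; exact lt_irrefl 0 this
  · exfalso
    have : (0:ℝ) < (((Nat.unpair x.b).2 : ℝ) + 1)⁻¹ := by positivity
    rw [hv] at this; exact lt_irrefl 0 this
  · have h1 : x.a = y.a := by
      have := congrArg P.a hc; simpa using this
    have h2 : (Nat.unpair x.b).1 = (Nat.unpair y.b).1 := by
      have := congrArg P.b hc; simpa using this
    have h3 : (Nat.unpair x.b).2 = (Nat.unpair y.b).2 := by
      have h := inv_inj.mp hv
      have : ((Nat.unpair x.b).2 : ℝ) = (Nat.unpair y.b).2 := by linarith
      exact_mod_cast this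
    have h4 : x.b = y.b := by
      have hx' := Nat.pair_unpair x.b
      rw [← hx', h2, h3, Nat.pair_unpair]
    exact P.ext' h1 h4

lemma dd_self (r : ℕ) (x : P) : dd r x x = 0 := by unfold dd; simp

lemma dd_comm (r : ℕ) (x y : P) : dd r x y = dd r y x := by
  unfold dd
  by_cases h : c r x = c r y
  · rw [if_pos h, if_pos h.symm, abs_sub_comm]
  · rw [if_neg h, if_neg (fun h' => h h'.symm)]

lemma dd_triangle (r : ℕ) (x z y : P) : dd r x y ≤ dd r x z + dd r z y := by
  unfold dd
  by_cases hxy : c r x = c r y <;> by_cases hxz : c r x = c r z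
  · have hzy : c r z = c r y := hxz ▸ hxy
    rw [if_pos hxy, if_pos hxz, if_pos hzy]
    exact abs_sub_le _ _ _
  · have hzy : ¬ c r z = c r y := fun h => hxz (hxy ▸ h.symm)
    rw [if_pos hxy, if_neg hxz, if_neg hzy]
    have h1 := v_nonneg r x; have h2 := v_nonneg r y
    have h3 := v_le_one r x; have h4 := v_le_one r y
    rw [abs_sub_le_iff]; constructor <;> linarith
  · have hzy : ¬ c r z = c r y := fun h => hxy (hxz.trans h)
    rw [if_neg hxy, if_pos hxz, if_neg hzy]
    have := abs_nonneg (v r x - v r z); linarith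
  · rw [if_neg hxy, if_neg hxz]
    split
    · linarith [abs_nonneg (v r z - v r y)]
    · linarith

lemma dd_eq_zero (r : ℕ) (x y : P) (h : dd r x y = 0) : x = y := by
  unfold dd at h
  by_cases hc : c r x = c r y
  · rw [if_pos hc] at h
    exact inj r hc (sub_eq_zero.mp (abs_eq_zero.mp h))
  · rw [if_neg hc] at h; norm_num at h

/-- The metric space. -/
def msp (r : ℕ) : MetricSpace P where
  dist := dd r
  dist_self := dd_self r
  dist_comm := dd_comm r
  dist_triangle := dd_triangle r
  eq_of_dist_eq_zero := dd_eq_zero r _ _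

def top (r : ℕ) : TopologicalSpace P :=
  (msp r).toUniformSpace.toTopologicalSpace

def L (m : ℕ) : Set P := {p | p.a ≤ m}

lemma c_fst (r : ℕ) (hr : r < 2) (p : P) :
    p.a ≤ (c r p).a ∧ (c r p).a ≤ p.a + 1 ∧ (c r p).a % 2 = r := by
  unfold c; split
  · omega
  · simp only; omega

lemma isClosed_L (r m : ℕ) (hr : r < 2) (h : (m + 1) % 2 = r) :
    @IsClosed _ (top r) (L (m + 1)) := by
  letI := msp r
  show IsClosed (L (m + 1))
  rw [← isOpen_compl_iff, Metric.isOpen_iff]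
  intro x hx
  refine ⟨1, one_pos, fun y hy => ?_⟩
  simp only [Set.mem_compl_iff, L, Set.mem_setOf_eq, not_le] at hx ⊢
  have hd : dist y x < 1 := hy
  have hcc : c r y = c r x := by
    by_contra hne
    have h1 : dist y x = 1 := by show dd r y x = 1; unfold dd; rw [if_neg hne]
    rw [h1] at hd; exact lt_irrefl _ hd
  obtain ⟨h1, h2, h3⟩ := c_fst r hr x
  obtain ⟨h4, h5, h6⟩ := c_fst r hr y
  rw [hcc] at h4 h5 h6
  omega

lemma closure_L (r m : ℕ) (hr : r < 2) (h : (m + 1) % 2 = r) :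
    @closure _ (top r) (L m) = L (m + 1) := by
  letI := msp r
  show closure (L m) = L (m + 1)
  apply le_antisymm
  · exact closure_minimal (fun p hp => le_trans hp (Nat.le_succ m)) (isClosed_L r m hr h)
  · intro x hx
    rcases Nat.lt_or_ge x.a (m + 1) with hlt | hge
    · exact subset_closure (Nat.lt_succ_iff.mp hlt)
    · have hx1 : x.a = m + 1 := le_antisymm hx hge
      rw [Metric.mem_closure_iff]
      intro ε hε
      obtain ⟨j, hj⟩ := exists_nat_one_div_lt hε
      refine ⟨⟨m, Nat.pair x.b j⟩, le_refl m, ?_⟩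
      have hxm : x.a % 2 = r := hx1 ▸ h
      have hym : ¬ ((⟨m, Nat.pair x.b j⟩ : P).a % 2 = r) := by simp only; omega
      have hc1 : c r x = x := if_pos hxm
      have hc2 : c r ⟨m, Nat.pair x.b j⟩ = x := by
        unfold c
        rw [if_neg hym]
        simp only [Nat.unpair_pair]
        exact P.ext' (by simp [hx1]) rfl
      have hdd : dist x (⟨m, Nat.pair x.b j⟩ : P)
          = |v r x - v r ⟨m, Nat.pair x.b j⟩| := by
        show dd r _ _ = _
        unfold dd
        rw [if_pos (hc1.trans hc2.symm)]
      rw [hdd]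
      have hv1 : v r x = 0 := if_pos hxm
      have hv2 : v r ⟨m, Nat.pair x.b j⟩ = ((j : ℝ) + 1)⁻¹ := by
        unfold v
        rw [if_neg hym]
        simp [Nat.unpair_pair]
      rw [hv1, hv2, abs_sub_comm, sub_zero, abs_of_pos (by positivity)]
      rw [one_div] at hj
      exact hj

lemma iter_L (n : ℕ) :
    (fun S : Set P => @closure _ (top 0) (@closure _ (top 1) S))^[n] (L 0) = L (2 * n) := by
  induction n with
  | zero => rfl
  | succ n ih =>
    rw [Function.iterate_succ_apply', ih]
    have h1 : @closure _ (top 1) (L (2 * n)) = L (2 * n + 1) :=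
      closure_L 1 (2 * n) (by omega) (by omega)
    have h2 : @closure _ (top 0) (L (2 * n + 1)) = L (2 * n + 2) :=
      closure_L 0 (2 * n + 1) (by omega) (by omega)
    rw [h1, h2]
    have he : 2 * n + 2 = 2 * (n + 1) := by omega
    rw [he]

lemma L_inj : Function.Injective (fun n : ℕ => L (2 * n)) := by
  intro n m h
  have h1 : (⟨2 * n, 0⟩ : P) ∈ L (2 * n) := by simp [L]
  have h2 : (⟨2 * m, 0⟩ : P) ∈ L (2 * m) := by simp [L]
  simp only at h
  rw [h] at h1
  rw [← h] at h2
  simp only [L, Set.mem_setOf_eq] at h1 h2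
  omega

end

end IKB

theorem infinite_kuratowski_bitopological :
    ∃ (X : Type) (t₀ t₁ : TopologicalSpace X), Countable X ∧
      @TopologicalSpace.MetrizableSpace X t₀ ∧
      @TopologicalSpace.MetrizableSpace X t₁ ∧
      (∃ A : Set X, Function.Injective
        (fun n : ℕ => (fun S : Set X => @closure X t₁ (@closure X t₀ S))^[n] A)) ∧
      Infinite (Submonoid.closure
        ({(fun S => @closure X t₀ S), (fun S => @closure X t₁ S)} :
          Set (Function.End (Set X)))) := by
  refine ⟨IKB.P, IKB.top 1, IKB.top 0, inferInstance, ?_, ?_, ?_, ?_⟩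
  · letI := IKB.msp 1
    unfold IKB.top
    exact inferInstance
  · letI := IKB.msp 0
    unfold IKB.top
    exact inferInstance
  · refine ⟨IKB.L 0, ?_⟩
    intro n m h
    apply IKB.L_inj
    simp only [← IKB.iter_L]
    exact h
  · set f₀ : Function.End (Set IKB.P) := fun S => @closure _ (IKB.top 1) S with hf₀
    set f₁ : Function.End (Set IKB.P) := fun S => @closure _ (IKB.top 0) S with hf₁
    have hmem : f₁ * f₀ ∈ Submonoid.closure ({f₀, f₁} : Set (Function.End (Set IKB.P))) :=
      mul_mem (Submonoid.subset_closure (Set.mem_insert_of_mem _ rfl))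
        (Submonoid.subset_closure (Set.mem_insert _ _))
    have pow_eq : ∀ (n : ℕ) (A : Set IKB.P),
        ((f₁ * f₀) ^ n : Function.End (Set IKB.P)) A
          = (fun S : Set IKB.P => f₁ (f₀ S))^[n] A := by
      intro n
      induction n with
      | zero => intro A; rfl
      | succ n ih =>
        intro A
        rw [pow_succ, Function.iterate_succ_apply]
        exact ih _
    refine Infinite.of_injective
      (fun n : ℕ => (⟨(f₁ * f₀) ^ n, pow_mem hmem n⟩ :
        Submonoid.closure ({f₀, f₁} : Set (Function.End (Set IKB.P))))) ?_
    intro n m h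
    have h' : ((f₁ * f₀) ^ n : Function.End (Set IKB.P)) = (f₁ * f₀) ^ m :=
      congrArg Subtype.val h
    have h'' := congrFun h' (IKB.L 0)
    rw [pow_eq, pow_eq] at h''
    have hL : IKB.L (2 * n) = IKB.L (2 * m) := by
      rw [← IKB.iter_L n, ← IKB.iter_L m]
      exact h''
    exact IKB.L_inj hL
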